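/- arXiv:1006.3493 — 11 statements merged into one kernel-verified Lean document; each statement's English description precedes it below -/
import Mathlib

section
/- Every numerical semigroup with multiplicity m can be expressed as a finite intersection of m-irreducible numerical semigroups. -/
def IsNumericalSemigroup (S : Set ℕ) : Prop :=
  0 ∈ S ∧ (∀ a ∈ S, ∀ b ∈ S, a + b ∈ S) ∧ Sᶜ.Finite

noncomputable def multNS (S : Set ℕ) : ℕ := sInf {x ∈ S | x ≠ 0}

noncomputable def frobNS (S : Set ℕ) : ℕ := sSup Sᶜ

noncomputable def genusNS (S : Set ℕ) : ℕ := Sᶜ.ncard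

/-- `S` is `m`-irreducible: it lies in `𝒮(m)` and is not the intersection of two
elements of `𝒮(m)` properly containing it. -/
def MIrreducibleNS (m : ℕ) (S : Set ℕ) : Prop :=
  IsNumericalSemigroup S ∧ multNS S = m ∧
    ¬∃ S₁ S₂ : Set ℕ, (IsNumericalSemigroup S₁ ∧ multNS S₁ = m) ∧
      (IsNumericalSemigroup S₂ ∧ multNS S₂ = m) ∧ S ⊂ S₁ ∧ S ⊂ S₂ ∧ S = S₁ ∩ S₂

/-- `S` is irreducible: not the intersection of two numerical semigroups properly
containing it. -/
def IrreducibleNS (S : Set ℕ) : Prop :=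
  IsNumericalSemigroup S ∧
    ¬∃ S₁ S₂ : Set ℕ, IsNumericalSemigroup S₁ ∧ IsNumericalSemigroup S₂ ∧
      S ⊂ S₁ ∧ S ⊂ S₂ ∧ S = S₁ ∩ S₂

lemma compl_ncard_lt {S T : Set ℕ} (h : S ⊂ T) (hS : Sᶜ.Finite) :
    Tᶜ.ncard < Sᶜ.ncard := by
  apply Set.ncard_lt_ncard _ hS
  constructor
  · exact Set.compl_subset_compl.mpr h.subset
  · intro hc
    exact h.not_subset (Set.compl_subset_compl.mp hc)

lemma key (m : ℕ) : ∀ n : ℕ, ∀ S : Set ℕ, Sᶜ.ncard ≤ n →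
    IsNumericalSemigroup S → multNS S = m →
    ∃ 𝒮 : Finset (Set ℕ), 𝒮.Nonempty ∧ (∀ T ∈ 𝒮, MIrreducibleNS m T) ∧
      S = ⋂₀ (𝒮 : Set (Set ℕ)) := by
  classical
  intro n
  induction n with
  | zero =>
    intro S hn hS hm
    refine ⟨{S}, Finset.singleton_nonempty S, ?_, by simp⟩
    intro T hT
    rw [Finset.mem_singleton] at hT
    subst hT
    refine ⟨hS, hm, ?_⟩
    rintro ⟨S₁, S₂, ⟨hS₁, _⟩, _, hsub, _, _⟩
    have := compl_ncard_lt hsub hS.2.2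
    omega
  | succ n ih =>
    intro S hn hS hm
    by_cases hirr : MIrreducibleNS m S
    · exact ⟨{S}, Finset.singleton_nonempty S, by simpa using hirr, by simp⟩
    · have hex : ∃ S₁ S₂ : Set ℕ, (IsNumericalSemigroup S₁ ∧ multNS S₁ = m) ∧
          (IsNumericalSemigroup S₂ ∧ multNS S₂ = m) ∧ S ⊂ S₁ ∧ S ⊂ S₂ ∧ S = S₁ ∩ S₂ := by
        by_contra hc
        exact hirr ⟨hS, hm, hc⟩
      obtain ⟨S₁, S₂, ⟨hS₁, hm₁⟩, ⟨hS₂, hm₂⟩, hsub₁, hsub₂, heq⟩ := hex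
      have h₁ : S₁ᶜ.ncard ≤ n := by
        have := compl_ncard_lt hsub₁ hS.2.2; omega
      have h₂ : S₂ᶜ.ncard ≤ n := by
        have := compl_ncard_lt hsub₂ hS.2.2; omega
      obtain ⟨𝒮₁, hne₁, hirr₁, hint₁⟩ := ih S₁ h₁ hS₁ hm₁
      obtain ⟨𝒮₂, hne₂, hirr₂, hint₂⟩ := ih S₂ h₂ hS₂ hm₂
      refine ⟨𝒮₁ ∪ 𝒮₂, Finset.Nonempty.mono Finset.subset_union_left hne₁, ?_, ?_⟩
      · intro T hT
        rcases Finset.mem_union.mp hT with h | h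
        · exact hirr₁ T h
        · exact hirr₂ T h
      · rw [heq, hint₁, hint₂, Finset.coe_union, Set.sInter_union]

theorem stmt0 (m : ℕ) (S : Set ℕ) (hS : IsNumericalSemigroup S) (hm : multNS S = m) :
    ∃ 𝒮 : Finset (Set ℕ), 𝒮.Nonempty ∧ (∀ T ∈ 𝒮, MIrreducibleNS m T) ∧
      S = ⋂₀ (𝒮 : Set (Set ℕ)) := by
  exact key m Sᶜ.ncard S le_rfl hS hm
end

section
/- Let S be a numerical semigroup with multiplicity m. Then S is m-irreducible if and only if S is maximal, with respect to inclusion, among numerical semigroups with multiplicity m and Frobenius number F(S). -/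
lemma frob_lt_mem {S : Set ℕ} (hfin : Sᶜ.Finite) {x : ℕ} (hx : frobNS S < x) : x ∈ S := by
  by_contra h
  exact absurd (le_csSup hfin.bddAbove h) (not_le.mpr hx)

lemma multset_nonempty {S : Set ℕ} (hS : IsNumericalSemigroup S) :
    {x ∈ S | x ≠ 0}.Nonempty := by
  have := hS.2.2.infinite_compl
  rw [compl_compl] at this
  obtain ⟨b, hb, hb0⟩ := this.exists_gt 0
  exact ⟨b, hb, by omega⟩

lemma mult_mem {S : Set ℕ} (hS : IsNumericalSemigroup S) :
    multNS S ∈ S ∧ multNS S ≠ 0 := Nat.sInf_mem (multset_nonempty hS)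

lemma mult_le {S : Set ℕ} {x : ℕ} (hx : x ∈ S) (h0 : x ≠ 0) : multNS S ≤ x :=
  Nat.sInf_le ⟨hx, h0⟩

theorem stmt4 (m : ℕ) (S : Set ℕ) (hS : IsNumericalSemigroup S) (hm : multNS S = m) :
    MIrreducibleNS m S ↔
      ∀ T : Set ℕ, IsNumericalSemigroup T → multNS T = m → frobNS T = frobNS S →
        S ⊆ T → T = S := by
  have hm0 : m ≠ 0 := hm ▸ (mult_mem hS).2
  have hmS : m ∈ S := hm ▸ (mult_mem hS).1
  constructor
  · rintro ⟨-, -, hirr⟩ T hT hmT hfT hST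
    by_contra hne
    have hsub : S ⊂ T := ⟨hST, fun h => hne (subset_antisymm h hST)⟩
    set f := frobNS S with hf
    rcases lt_or_ge f m with hfm | hfm
    · -- every nonzero element of T is ≥ m > f hence in S
      refine hne (subset_antisymm (fun x hx => ?_) hST)
      rcases eq_or_ne x 0 with rfl | h0
      · exact hS.1
      · have : m ≤ x := hmT ▸ mult_le hx h0
        exact frob_lt_mem hS.2.2 (by omega)
    · -- f ≥ m. First: f ∉ S.
      have hSc : Sᶜ.Nonempty := by
        by_contra h
        rw [Set.not_nonempty_iff_eq_empty] at h
        have : f = 0 := by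
          rw [hf, frobNS, h, csSup_empty]; rfl
        omega
      have hfS : f ∉ S := Nat.sSup_mem hSc hS.2.2.bddAbove
      have hmf : m < f := lt_of_le_of_ne hfm (fun h => hfS (h ▸ hmS))
      have hTc : Tᶜ.Nonempty := by
        by_contra h
        rw [Set.not_nonempty_iff_eq_empty] at h
        have : frobNS T = 0 := by rw [frobNS, h, csSup_empty]; rfl
        omega
      have hfT' : f ∉ T := by
        have := Nat.sSup_mem hTc hT.2.2.bddAbove
        rwa [show sSup Tᶜ = f from hfT] at this
      apply hirr
      refine ⟨T, S ∪ {f}, ⟨hT, hmT⟩, ⟨⟨Or.inl hS.1, ?_, ?_⟩, ?_⟩, hsub, ?_, ?_⟩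
      · -- closure of S ∪ {f}
        intro a ha b hb
        simp only [Set.mem_union, Set.mem_singleton_iff] at ha hb ⊢
        rcases ha with ha | rfl
        · rcases hb with hb | rfl
          · exact Or.inl (hS.2.1 a ha b hb)
          · rcases eq_or_ne a 0 with rfl | h0
            · exact Or.inr (by omega)
            · exact Or.inl (frob_lt_mem hS.2.2 (by omega))
        · rcases hb with hb | rfl
          · rcases eq_or_ne b 0 with rfl | h0
            · exact Or.inr (by omega)
            · exact Or.inl (frob_lt_mem hS.2.2 (by omega))
          · exact Or.inl (frob_lt_mem hS.2.2 (by omega))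
      · exact hS.2.2.subset (by rw [Set.compl_union]; exact Set.inter_subset_left)
      · -- multiplicity of S ∪ {f} is m
        refine le_antisymm (Nat.sInf_le ⟨Or.inl hmS, hm0⟩) ?_
        refine le_csInf ⟨m, Or.inl hmS, hm0⟩ ?_
        rintro b ⟨hb | hb, hb0⟩
        · exact hm ▸ mult_le hb hb0
        · rcases hb with rfl; omega
      · exact ⟨Set.subset_union_left, fun h => hfS (h (Set.mem_union_right _ rfl))⟩
      · ext x
        constructor
        · exact fun hx => ⟨hST hx, Or.inl hx⟩
        · rintro ⟨hxT, hx | hx⟩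
          · exact hx
          · rcases hx with rfl; exact absurd hxT hfT'
  · intro H
    refine ⟨hS, hm, ?_⟩
    rintro ⟨S₁, S₂, ⟨h1, hm1⟩, ⟨h2, hm2⟩, hs1, hs2, heq⟩
    have hSc : Sᶜ.Nonempty := by
      by_contra h
      rw [Set.not_nonempty_iff_eq_empty, Set.compl_empty_iff] at h
      exact hs1.ne (subset_antisymm hs1.subset (h ▸ Set.subset_univ _))
    have hfS : frobNS S ∉ S := Nat.sSup_mem hSc hS.2.2.bddAbove
    have key : ∀ S', IsNumericalSemigroup S' → multNS S' = m → S ⊂ S' →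
        frobNS S ∉ S' → False := by
      intro S' h' hm' hss hf'
      have hcs : S'ᶜ ⊆ Sᶜ := Set.compl_subset_compl.mpr hss.subset
      have hfin' : S'ᶜ.Finite := hS.2.2.subset hcs
      have h1 : frobNS S ≤ frobNS S' := le_csSup hfin'.bddAbove hf'
      have h2 : frobNS S' ≤ frobNS S :=
        le_csSup hS.2.2.bddAbove (hcs (Nat.sSup_mem ⟨_, hf'⟩ hfin'.bddAbove))
      exact hss.ne (H S' h' hm' (le_antisymm h2 h1) hss.subset).symm
    have hfI : frobNS S ∉ S₁ ∩ S₂ := by rw [← heq]; exact hfS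
    by_cases hc : frobNS S ∈ S₁
    · exact key S₂ h2 hm2 hs2 (fun hh => hfI ⟨hc, hh⟩)
    · exact key S₁ h1 hm1 hs1 hc
end

section
/- The set of numerical semigroups with multiplicity m and Frobenius number F is nonempty if and only if F ≥ m−1 and F is not a multiple of m. -/
theorem stmt5 (m F : ℕ) (hm : 0 < m) (hF : 0 < F) :
    (∃ S : Set ℕ, IsNumericalSemigroup S ∧ multNS S = m ∧ frobNS S = F) ↔
      (m - 1 ≤ F ∧ ¬ m ∣ F) := by
  constructor
  · rintro ⟨S, ⟨h0, hadd, hfin⟩, hmult, hfrob⟩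
    have hbdd : BddAbove Sᶜ := hfin.bddAbove
    -- F ∉ S
    have hSinf : S.Infinite := by
      have := Set.Finite.infinite_compl (s := Sᶜ) hfin
      simpa using this
    have hne : {x ∈ S | x ≠ 0}.Nonempty := by
      obtain ⟨b, hb, hb0⟩ := hSinf.exists_gt 0
      exact ⟨b, hb, by omega⟩
    have hmS : m ∈ S := by
      have := Nat.sInf_mem hne
      rw [multNS] at hmult
      rw [hmult] at this
      exact this.1
    have hFc : F ∈ Sᶜ := by
      by_contra hFc
      -- then Sᶜ nonempty? need F ∉ S. sSup Sᶜ = F, if Sᶜ empty then F = 0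
      rcases Set.eq_empty_or_nonempty Sᶜ with he | hne'
      · rw [frobNS, he] at hfrob
        simp at hfrob
        omega
      · have := Nat.sSup_mem hne' hbdd
        rw [frobNS] at hfrob
        rw [hfrob] at this
        exact hFc this
    constructor
    · rcases Nat.eq_or_lt_of_le hm with h1 | h2
      · omega
      · -- m ≥ 2, show m - 1 ∈ Sᶜ
        have : m - 1 ∈ Sᶜ := by
          intro hmem
          have : sInf {x ∈ S | x ≠ 0} ≤ m - 1 := Nat.sInf_le ⟨hmem, by omega⟩
          rw [multNS] at hmult; omega
        have := le_csSup hbdd this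
        rw [frobNS] at hfrob; omega
    · rintro ⟨k, rfl⟩
      have : ∀ k : ℕ, m * k ∈ S := by
        intro k
        induction k with
        | zero => simpa using h0
        | succ n ih => have := hadd _ ih _ hmS; simpa [Nat.mul_succ] using this
      exact hFc (this k)
  · rintro ⟨hle, hdvd⟩
    refine ⟨{n | m ∣ n ∨ F < n}, ⟨by simp, ?_, ?_⟩, ?_, ?_⟩
    · rintro a (ha | ha) b (hb | hb)
      · exact Or.inl (Nat.dvd_add ha hb)
      · exact Or.inr (by omega)
      · exact Or.inr (by omega)
      · exact Or.inr (by omega)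
    · apply Set.Finite.subset (Set.finite_Icc 0 F)
      intro n hn
      simp only [Set.mem_compl_iff, Set.mem_setOf_eq, not_or, not_lt] at hn
      exact ⟨Nat.zero_le _, hn.2⟩
    · rw [multNS]
      apply le_antisymm
      · exact Nat.sInf_le ⟨Or.inl dvd_rfl, by omega⟩
      · refine le_csInf ⟨m, Or.inl dvd_rfl, by omega⟩ ?_
        rintro x ⟨hx | hx, hx0⟩
        · exact Nat.le_of_dvd (by omega) hx
        · omega
    · rw [frobNS]
      have hub : ∀ n ∈ {n | m ∣ n ∨ F < n}ᶜ, n ≤ F := by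
        intro n hn
        simp only [Set.mem_compl_iff, Set.mem_setOf_eq, not_or, not_lt] at hn
        exact hn.2
      have hFm : F ∈ {n | m ∣ n ∨ F < n}ᶜ := by
        simp only [Set.mem_compl_iff, Set.mem_setOf_eq, not_or, not_lt]
        exact ⟨hdvd, le_refl F⟩
      exact le_antisymm (csSup_le ⟨F, hFm⟩ hub) (le_csSup ⟨F, hub⟩ hFm)
end

section
/- Let S be a numerical semigroup with F(S) ≠ -1 and suppose h = max{x ∈ ℤ \ S : F(S) − x ∉ S and 2x ≠ F(S)} exists. Then S ∪ {h} is a numerical semigroup with Frobenius number F(S). -/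
theorem stmt6 (S : Set ℕ) (hS : IsNumericalSemigroup S) (hne : S ≠ Set.univ) (h : ℤ)
    (hh : IsGreatest {x : ℤ | x ∉ (Nat.cast '' S : Set ℤ) ∧
      ((frobNS S : ℤ) - x) ∉ (Nat.cast '' S : Set ℤ) ∧ 2 * x ≠ (frobNS S : ℤ)} h) :
    IsNumericalSemigroup (S ∪ {h.toNat}) ∧ frobNS (S ∪ {h.toNat}) = frobNS S := by
  obtain ⟨h0, hadd, hfin⟩ := hS
  set F := frobNS S with hF
  have hne' : Sᶜ.Nonempty := by rwa [Set.nonempty_compl]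
  have hbdd : BddAbove Sᶜ := hfin.bddAbove
  have hFmem : F ∉ S := Nat.sSup_mem hne' hbdd
  have hgt : ∀ m : ℕ, F < m → m ∈ S := by
    intro m hm
    by_contra hm'
    exact absurd (le_csSup hbdd hm') (not_le.2 hm)
  have hmem : ∀ m : ℕ, (m : ℤ) ∈ (Nat.cast '' S : Set ℤ) ↔ m ∈ S := by
    intro m; simp
  obtain ⟨⟨hh1, hh2, hh3⟩, hmax⟩ := hh
  have hpos : 0 < h := by
    rcases lt_trichotomy h 0 with hlt | heq | hgt'
    · exfalso
      apply hh2
      have he : (F : ℤ) - h = ((F + (-h).toNat : ℕ) : ℤ) := by push_cast; omega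
      rw [he, hmem]
      exact hgt _ (by omega)
    · exfalso
      apply hh1
      rw [heq]
      exact_mod_cast (hmem 0).2 h0
    · exact hgt'
  set n := h.toNat with hndef
  have hn : (n : ℤ) = h := Int.toNat_of_nonneg hpos.le
  have hnS : n ∉ S := by
    intro hs
    exact hh1 (hn ▸ (hmem n).2 hs)
  have hnleF : n ≤ F := le_csSup hbdd hnS
  have hFnS : F - n ∉ S := by
    intro hs
    apply hh2
    have he : (F : ℤ) - h = ((F - n : ℕ) : ℤ) := by push_cast [Nat.cast_sub hnleF]; omega
    rw [he, hmem]
    exact hs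
  have hFlt : F < 2 * n := by
    have hy : (F : ℤ) - h ≤ h := by
      apply hmax
      refine ⟨hh2, ?_, ?_⟩
      · have : (F : ℤ) - ((F : ℤ) - h) = h := by ring
        rw [this]; exact hh1
      · intro hc; apply hh3; omega
    have : 2 * h ≠ (F : ℤ) := hh3
    omega
  have hsum : ∀ s ∈ S, s ≠ 0 → s + n ∈ S := by
    intro s hs hs0
    by_contra hx
    have hmem' : (s : ℤ) + h ≤ h := by
      apply hmax
      refine ⟨?_, ?_, ?_⟩
      · intro hc
        rw [show (s : ℤ) + h = ((s + n : ℕ) : ℤ) by push_cast; omega, hmem] at hc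
        exact hx hc
      · intro hc
        obtain ⟨t, ht, htc⟩ := hc
        apply hFnS
        have he : t + s = F - n := by omega
        rw [← he]
        exact hadd t ht s hs
      · intro hc
        omega
    omega
  have h2n : n + n ∈ S := hgt _ (by omega)
  have hnF : n ≠ F := by
    intro hc
    apply hFnS
    simpa [hc] using h0
  have hT : IsNumericalSemigroup (S ∪ {n}) := by
    refine ⟨Or.inl h0, ?_, hfin.subset (Set.compl_subset_compl.2 Set.subset_union_left)⟩
    rintro a (ha | ha) b (hb | hb)
    · exact Or.inl (hadd a ha b hb)
    · rcases eq_or_ne a 0 with rfl | ha0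
      · rw [Set.mem_singleton_iff] at hb
        subst hb
        simp
      · rw [Set.mem_singleton_iff] at hb
        exact Or.inl (hb ▸ hsum a ha ha0)
    · rcases eq_or_ne b 0 with rfl | hb0
      · simpa using Or.inl ha
      · rw [Set.mem_singleton_iff] at ha
        refine Or.inl ?_
        rw [ha, add_comm]
        exact hsum b hb hb0
    · rw [Set.mem_singleton_iff] at ha hb
      exact Or.inl (ha ▸ hb ▸ h2n)
  refine ⟨hT, ?_⟩
  have hTc : (S ∪ {n})ᶜ ⊆ Sᶜ := Set.compl_subset_compl.2 Set.subset_union_left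
  have hFT : F ∈ (S ∪ {n})ᶜ := by
    simp only [Set.mem_compl_iff, Set.mem_union, Set.mem_singleton_iff, not_or]
    exact ⟨hFmem, fun hc => hnF hc.symm⟩
  apply le_antisymm
  · exact csSup_le_csSup hbdd ⟨F, hFT⟩ hTc
  · exact le_csSup (hfin.subset hTc).bddAbove hFT
end

section
/- A numerical semigroup S ≠ ℕ is irreducible if and only if the set {x ∈ ℤ \ S : F(S) − x ∉ S and 2x ≠ F(S)} is empty. -/
lemma gap_le_frob {S : Set ℕ} (hS : IsNumericalSemigroup S) {n : ℕ} (hn : n ∉ S) :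
    n ≤ frobNS S :=
  le_csSup hS.2.2.bddAbove hn

lemma frob_not_mem {S : Set ℕ} (hS : IsNumericalSemigroup S) (hne : S ≠ Set.univ) :
    frobNS S ∉ S := by
  have h : Sᶜ.Nonempty := by rw [Set.nonempty_compl]; exact hne
  exact Nat.sSup_mem h hS.2.2.bddAbove

lemma mem_of_gt_frob {S : Set ℕ} (hS : IsNumericalSemigroup S) {n : ℕ}
    (hn : frobNS S < n) : n ∈ S := by
  by_contra h
  exact absurd (gap_le_frob hS h) (not_le.mpr hn)

lemma union_ns {S : Set ℕ} (hS : IsNumericalSemigroup S) {x : ℕ}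
    (h1 : ∀ a ∈ S, a ≠ 0 → x + a ∈ S) (h2 : x + x ∈ S) :
    IsNumericalSemigroup (S ∪ {x}) := by
  obtain ⟨h0, hadd, hfin⟩ := hS
  refine ⟨Or.inl h0, ?_, ?_⟩
  · intro a ha b hb
    rcases ha with ha | ha <;> rcases hb with hb | hb
    · exact Or.inl (hadd a ha b hb)
    · rw [Set.mem_singleton_iff] at hb
      subst hb
      rcases eq_or_ne a 0 with rfl | ha0
      · rw [Nat.zero_add]; exact Or.inr rfl
      · exact Or.inl (by rw [Nat.add_comm]; exact h1 a ha ha0)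
    · rw [Set.mem_singleton_iff] at ha
      subst ha
      rcases eq_or_ne b 0 with rfl | hb0
      · rw [Nat.add_zero]; exact Or.inr rfl
      · exact Or.inl (h1 b hb hb0)
    · rw [Set.mem_singleton_iff] at ha hb
      subst ha; subst hb
      exact Or.inl h2
  · exact hfin.subset (fun y hy => by
      simp only [Set.compl_union, Set.mem_inter_iff] at hy; exact hy.1)

theorem stmt7 (S : Set ℕ) (hS : IsNumericalSemigroup S) (hne : S ≠ Set.univ) :
    IrreducibleNS S ↔
      {x : ℤ | x ∉ (Nat.cast '' S : Set ℤ) ∧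
        ((frobNS S : ℤ) - x) ∉ (Nat.cast '' S : Set ℤ) ∧ 2 * x ≠ (frobNS S : ℤ)} = ∅ := by
  set F := frobNS S with hF
  have hFS : F ∉ S := frob_not_mem hS hne
  have hFpos : 0 < F := Nat.pos_of_ne_zero (by rintro h; rw [h] at hFS; exact hFS hS.1)
  constructor
  · -- irreducible → set empty
    intro hirr
    by_contra hne'
    obtain ⟨x, hx1, hx2, hx3⟩ := Set.nonempty_iff_ne_empty.mpr hne'
    -- x is nonnegative
    have hx0 : 0 ≤ x := by
      by_contra hneg
      push_neg at hneg
      apply hx2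
      refine ⟨((F : ℤ) - x).toNat, ?_, ?_⟩
      · apply mem_of_gt_frob hS
        omega
      · omega
    obtain ⟨n, rfl⟩ := Int.eq_ofNat_of_zero_le hx0
    have hnS : n ∉ S := fun h => hx1 ⟨n, h, rfl⟩
    have hnF : n ≤ F := gap_le_frob hS hnS
    have hFnS : F - n ∉ S := by
      intro h
      exact hx2 ⟨F - n, h, by omega⟩
    have h2n : 2 * n ≠ F := by
      intro h
      exact hx3 (by omega)
    -- the set A of gaps h with F - h a gap and 2h ≠ F
    set A : Set ℕ := {h : ℕ | h ∉ S ∧ F - h ∉ S ∧ 2 * h ≠ F} with hA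
    have hAsub : A ⊆ Sᶜ := fun h hh => hh.1
    have hAbdd : BddAbove A := (hS.2.2.subset hAsub).bddAbove
    have hAne : A.Nonempty := ⟨n, hnS, hFnS, h2n⟩
    set x₀ := sSup A with hx₀
    have hx₀A : x₀ ∈ A := Nat.sSup_mem hAne hAbdd
    obtain ⟨hx₀S, hFx₀S, h2x₀⟩ := hx₀A
    have hx₀F : x₀ ≤ F := gap_le_frob hS hx₀S
    -- F - x₀ ∈ A, so F - x₀ ≤ x₀, hence F < 2x₀
    have hsym : F - x₀ ∈ A := by
      refine ⟨hFx₀S, ?_, ?_⟩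
      · rwa [Nat.sub_sub_self hx₀F]
      · omega
    have hle : F - x₀ ≤ x₀ := le_csSup hAbdd hsym
    have h2gt : F < 2 * x₀ := by omega
    -- S ∪ {x₀} is a numerical semigroup
    have hS₁ : IsNumericalSemigroup (S ∪ {x₀}) := by
      apply union_ns hS
      · intro a haS ha0
        by_contra hc
        have hgap : x₀ + a ≤ F := gap_le_frob hS hc
        have hmem : x₀ + a ∈ A := by
          refine ⟨hc, ?_, by omega⟩
          intro hm
          have := hS.2.1 _ hm a haS
          rw [show F - (x₀ + a) + a = F - x₀ by omega] at this
          exact hFx₀S this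
        have := le_csSup hAbdd hmem
        omega
      · exact mem_of_gt_frob hS (by omega)
    have hS₂ : IsNumericalSemigroup (S ∪ {F}) := by
      apply union_ns hS
      · intro a haS ha0
        exact mem_of_gt_frob hS (by omega)
      · exact mem_of_gt_frob hS (by omega)
    have hx₀ne : x₀ ≠ F := by
      intro h
      rw [h, Nat.sub_self] at hFx₀S
      exact hFx₀S hS.1
    exact hirr.2 ⟨S ∪ {x₀}, S ∪ {F}, hS₁, hS₂,
      ⟨Set.subset_union_left, fun h => hx₀S (h (Or.inr rfl))⟩,
      ⟨Set.subset_union_left, fun h => hFS (h (Or.inr rfl))⟩,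
      by
        ext y
        simp only [Set.mem_inter_iff, Set.mem_union, Set.mem_singleton_iff]
        constructor
        · intro hy; exact ⟨Or.inl hy, Or.inl hy⟩
        · rintro ⟨hy1 | rfl, hy2 | h2⟩ <;> first
          | assumption
          | (exact absurd h2 hx₀ne) ⟩
  · -- set empty → irreducible
    intro hempty
    have key : ∀ n : ℕ, n ∉ S → 2 * n ≠ F → F - n ∈ S := by
      intro n hnS h2n
      have hnF : n ≤ F := gap_le_frob hS hnS
      have := Set.eq_empty_iff_forall_notMem.mp hempty (n : ℤ)
      simp only [Set.mem_setOf_eq, not_and, not_not, ne_eq] at this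
      have h1 : (n : ℤ) ∉ (Nat.cast '' S : Set ℤ) := by
        rintro ⟨m, hm, hmeq⟩
        have : m = n := by exact_mod_cast hmeq
        exact hnS (this ▸ hm)
      have h2 : ((F : ℤ) - n) ∈ (Nat.cast '' S : Set ℤ) := by
        by_contra hc
        have h3 := this h1 hc
        omega
      obtain ⟨m, hm, hmeq⟩ := h2
      have : m = F - n := by omega
      exact this ▸ hm
    refine ⟨hS, ?_⟩
    rintro ⟨S₁, S₂, h₁, h₂, hsub₁, hsub₂, heq⟩
    have main : ∀ T : Set ℕ, IsNumericalSemigroup T → S ⊂ T → F ∈ T := by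
      intro T hT hsub
      by_contra hFT
      obtain ⟨y, hyT, hyS⟩ := Set.exists_of_ssubset hsub
      rcases eq_or_ne (2 * y) F with h2y | h2y
      · apply hFT
        have := hT.2.1 y hyT y hyT
        rwa [show y + y = 2 * y by omega, h2y] at this
      · have hmem : F - y ∈ S := key y hyS h2y
        have hyF : y ≤ F := gap_le_frob hS hyS
        have := hT.2.1 y hyT (F - y) (hsub.1 hmem)
        rw [show y + (F - y) = F by omega] at this
        exact hFT this
    have hF₁ := main S₁ h₁ hsub₁
    have hF₂ := main S₂ h₂ hsub₂
    exact hFS (heq ▸ Set.mem_inter hF₁ hF₂)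
end

section
/- For every numerical semigroup S ≠ ℕ, the genus satisfies g(S) ≥ ⌈(F(S)+1)/2⌉, with equality if and only if S is irreducible. -/
namespace IsNumericalSemigroup

variable {S : Set ℕ}

theorem zero_mem (hS : IsNumericalSemigroup S) : 0 ∈ S := hS.1

theorem add_mem (hS : IsNumericalSemigroup S) {a b : ℕ} (ha : a ∈ S) (hb : b ∈ S) :
    a + b ∈ S :=
  hS.2.1 a ha b hb

theorem finite_compl (hS : IsNumericalSemigroup S) : Sᶜ.Finite := hS.2.2

theorem frobNS_notMem (hS : IsNumericalSemigroup S) (hne : S ≠ Set.univ) : frobNS S ∉ S :=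
  (Set.nonempty_compl.mpr hne).csSup_mem hS.finite_compl

theorem le_frobNS_of_notMem (hS : IsNumericalSemigroup S) {x : ℕ} (hx : x ∉ S) :
    x ≤ frobNS S :=
  le_csSup hS.finite_compl.bddAbove hx

theorem mem_of_frobNS_lt (hS : IsNumericalSemigroup S) {x : ℕ} (hx : frobNS S < x) : x ∈ S :=
  by_contra fun h => (hS.le_frobNS_of_notMem h).not_gt hx

theorem sub_notMem_of_mem (hS : IsNumericalSemigroup S) {n x : ℕ} (hn : n ∉ S) (hx : x ∈ S)
    (hxn : x ≤ n) : n - x ∉ S := fun h => hn (by simpa [hxn] using hS.add_mem h hx)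

theorem insert_of_add_mem (hS : IsNumericalSemigroup S) {h : ℕ} (h2h : h + h ∈ S)
    (hadd : ∀ s ∈ S, s ≠ 0 → h + s ∈ S) : IsNumericalSemigroup (insert h S) := by
  have key : ∀ a ∈ S, h + a ∈ insert h S := fun a ha => by
    rcases eq_or_ne a 0 with rfl | ha0
    · exact Or.inl rfl
    · exact Or.inr (hadd a ha ha0)
  refine ⟨.inr hS.zero_mem, ?_, hS.finite_compl.subset (Set.compl_subset_compl.mpr
    (Set.subset_insert _ _))⟩
  rintro a (rfl | ha) b (rfl | hb)
  · exact .inr h2h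
  · exact key b hb
  · exact add_comm b a ▸ key a ha
  · exact .inr (hS.add_mem ha hb)

theorem insert_frobNS (hS : IsNumericalSemigroup S) (hne : S ≠ Set.univ) :
    IsNumericalSemigroup (insert (frobNS S) S) := by
  have hF0 : frobNS S ≠ 0 := fun e => hS.frobNS_notMem hne (e ▸ hS.zero_mem)
  exact hS.insert_of_add_mem (hS.mem_of_frobNS_lt (by omega))
    fun s _ hs => hS.mem_of_frobNS_lt (by omega)

open Finset

theorem genusNS_eq_card_filter_notMem (hS : IsNumericalSemigroup S) [DecidablePred (· ∈ S)] :
    genusNS S = #{x ∈ range (frobNS S + 1) | x ∉ S} := by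
  rw [genusNS, Set.ncard_eq_toFinset_card _ hS.finite_compl]
  congr 1
  ext x
  simpa using fun hx => Nat.lt_succ_of_le (hS.le_frobNS_of_notMem hx)

theorem card_filter_mem_add_genusNS (hS : IsNumericalSemigroup S) [DecidablePred (· ∈ S)] :
    #{x ∈ range (frobNS S + 1) | x ∈ S} + genusNS S = frobNS S + 1 := by
  rw [hS.genusNS_eq_card_filter_notMem, card_filter_add_card_filter_not, card_range]

theorem frobNS_add_one_le_two_mul_genusNS (hS : IsNumericalSemigroup S) (hne : S ≠ Set.univ) :
    frobNS S + 1 ≤ 2 * genusNS S := by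
  classical
  have count := hS.card_filter_mem_add_genusNS
  rw [hS.genusNS_eq_card_filter_notMem] at count ⊢
  set F := frobNS S
  have reflect : #{x ∈ range (F + 1) | x ∈ S} ≤ #{x ∈ range (F + 1) | x ∉ S} := by
    refine card_le_card_of_injOn (F - ·) (fun x hx => ?_) (fun x hx y hy hxy => ?_)
    · simp only [coe_filter, mem_range, Set.mem_ofPred_eq] at hx ⊢
      exact ⟨by omega, hS.sub_notMem_of_mem (hS.frobNS_notMem hne) hx.2 (by omega)⟩
    · simp only [coe_filter, mem_range, Set.mem_ofPred_eq] at hx hy hxy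
      omega
  omega

theorem two_mul_genusNS_le_of_sub_mem (hS : IsNumericalSemigroup S)
    (hsym : ∀ x ∉ S, 2 * x ≠ frobNS S → frobNS S - x ∈ S) : 2 * genusNS S ≤ frobNS S + 2 := by
  classical
  have count := hS.card_filter_mem_add_genusNS
  rw [hS.genusNS_eq_card_filter_notMem] at count ⊢
  set F := frobNS S
  have reflect : #{x ∈ range (F + 1) | x ∉ S ∧ 2 * x ≠ F} ≤ #{x ∈ range (F + 1) | x ∈ S} := by
    refine card_le_card_of_injOn (F - ·) (fun x hx => ?_) (fun x hx y hy hxy => ?_)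
    · simp only [coe_filter, mem_range, Set.mem_ofPred_eq] at hx ⊢
      exact ⟨by omega, hsym x hx.2.1 hx.2.2⟩
    · simp only [coe_filter, mem_range, Set.mem_ofPred_eq] at hx hy hxy
      omega
  have half : #{x ∈ range (F + 1) | x ∉ S ∧ ¬2 * x ≠ F} ≤ 1 :=
    card_le_one.mpr fun a ha b hb => by simp only [mem_filter, not_not] at ha hb; omega
  have split := card_filter_add_card_filter_not (s := {x ∈ range (F + 1) | x ∉ S})
    (p := fun x => 2 * x ≠ F)
  simp only [filter_filter] at split
  omega

theorem frobNS_mem_of_ssubset (hS : IsNumericalSemigroup S) (hg : 2 * genusNS S ≤ frobNS S + 2)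
    {T : Set ℕ} (hT : IsNumericalSemigroup T) (hST : S ⊂ T) : frobNS S ∈ T := by
  by_contra hFT
  have hTne : T ≠ Set.univ := fun e => hFT (e ▸ Set.mem_univ _)
  have hFle : frobNS S ≤ frobNS T := hT.le_frobNS_of_notMem hFT
  have hgT : genusNS T < genusNS S :=
    Set.ncard_lt_ncard (compl_lt_compl_iff_lt.mpr hST) hS.finite_compl
  have := hT.frobNS_add_one_le_two_mul_genusNS hTne
  omega

theorem irreducibleNS (hS : IsNumericalSemigroup S) (hne : S ≠ Set.univ)
    (hg : 2 * genusNS S ≤ frobNS S + 2) : IrreducibleNS S := by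
  refine ⟨hS, fun ⟨S₁, S₂, h₁, h₂, hS₁, hS₂, hinter⟩ => hS.frobNS_notMem hne ?_⟩
  have hF : frobNS S ∈ S₁ ∩ S₂ :=
    ⟨hS.frobNS_mem_of_ssubset hg h₁ hS₁, hS.frobNS_mem_of_ssubset hg h₂ hS₂⟩
  rwa [← hinter] at hF

theorem insert_of_isGreatest (hS : IsNumericalSemigroup S) {h : ℕ}
    (hh : IsGreatest {x | x ∉ S ∧ frobNS S - x ∉ S ∧ 2 * x ≠ frobNS S} h) :
    IsNumericalSemigroup (insert h S) := by
  obtain ⟨⟨hhS, hFh, h2h⟩, hmax⟩ := hh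
  have hhF : h ≤ frobNS S := hS.le_frobNS_of_notMem hhS
  -- `frobNS S - h` is a competitor too, so maximality forces `2 * h > frobNS S`.
  have hF2h : frobNS S < 2 * h := by
    have := hmax ⟨hFh, by rwa [Nat.sub_sub_self hhF], by omega⟩
    omega
  refine hS.insert_of_add_mem (hS.mem_of_frobNS_lt (by omega)) fun s hs hs0 => ?_
  by_contra hhs
  have hhsF := hS.le_frobNS_of_notMem hhs
  have hFhs : frobNS S - (h + s) ∉ S :=
    Nat.sub_sub _ h s ▸ hS.sub_notMem_of_mem hFh hs (by omega)
  have := hmax ⟨hhs, hFhs, by omega⟩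
  omega

theorem not_irreducibleNS (hS : IsNumericalSemigroup S) (hne : S ≠ Set.univ)
    (hg : frobNS S + 3 ≤ 2 * genusNS S) : ¬IrreducibleNS S := by
  set F := frobNS S
  set P := {x | x ∉ S ∧ F - x ∉ S ∧ 2 * x ≠ F}
  have hPne : P.Nonempty := by
    by_contra hP
    have := hS.two_mul_genusNS_le_of_sub_mem fun x hx h2x =>
      by_contra fun hFx => hP ⟨x, hx, hFx, h2x⟩
    omega
  have hPfin : P.Finite := hS.finite_compl.subset fun x hx => hx.1
  have hh : IsGreatest P (sSup P) := ⟨hPne.csSup_mem hPfin, fun x hx => le_csSup hPfin.bddAbove hx⟩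
  obtain ⟨hhS, hFh, -⟩ := hh.1
  have hhF : sSup P ≠ F := fun e => hFh (by simpa [e] using hS.zero_mem)
  refine fun hirr => hirr.2 ⟨insert (sSup P) S, insert F S, hS.insert_of_isGreatest hh,
    hS.insert_frobNS hne, Set.ssubset_insert hhS, Set.ssubset_insert (hS.frobNS_notMem hne), ?_⟩
  rw [Set.insert_inter_of_notMem (by simpa [hhF] using hhS),
    Set.inter_eq_left.mpr (Set.subset_insert _ _)]

end IsNumericalSemigroup

theorem stmt11 (S : Set ℕ) (hS : IsNumericalSemigroup S) (hne : S ≠ Set.univ) :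
    (frobNS S + 2) / 2 ≤ genusNS S ∧
      (genusNS S = (frobNS S + 2) / 2 ↔ IrreducibleNS S) := by
  have hg := hS.frobNS_add_one_le_two_mul_genusNS hne
  refine ⟨by omega, fun heq => hS.irreducibleNS hne (by omega), fun hirr => ?_⟩
  by_contra hneq
  exact hS.not_irreducibleNS hne (by omega) hirr
end

section
/- Let S be a numerical semigroup with multiplicity m and Frobenius number F. Then S is m-irreducible if and only if g(S) = min{g(T) : T numerical semigroup with multiplicity m and Frobenius number F}. -/
namespace NSAux

lemma gt_frob_mem {S : Set ℕ} (hS : IsNumericalSemigroup S) {x : ℕ}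
    (hx : frobNS S < x) : x ∈ S := by
  by_contra h
  exact absurd (le_csSup hS.2.2.bddAbove h) (not_le.mpr hx)

lemma frob_not_mem {S : Set ℕ} (hS : IsNumericalSemigroup S) (hne : Sᶜ.Nonempty) :
    frobNS S ∉ S :=
  Nat.sSup_mem hne hS.2.2.bddAbove

lemma mult_mem {S : Set ℕ} (hS : IsNumericalSemigroup S) :
    multNS S ∈ S ∧ multNS S ≠ 0 := by
  have h1 : frobNS S + 1 ∈ {x ∈ S | x ≠ 0} :=
    ⟨gt_frob_mem hS (by omega), by omega⟩
  exact Nat.sInf_mem ⟨_, h1⟩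

lemma mult_le {S : Set ℕ} {x : ℕ} (hx : x ∈ S) (h0 : x ≠ 0) : multNS S ≤ x :=
  Nat.sInf_le ⟨hx, h0⟩

lemma compl_ne_of_one_le {S : Set ℕ} {F : ℕ} (hF : frobNS S = F) (hF1 : 1 ≤ F) :
    Sᶜ.Nonempty := by
  by_contra h
  rw [Set.not_nonempty_iff_eq_empty] at h
  simp only [frobNS, h, csSup_empty, Nat.bot_eq_zero] at hF
  omega

/-- The number of gaps of `S` plus the number of elements of `S` in `[1,F]` is `F`. -/
lemma genus_eq {S : Set ℕ} {F : ℕ} (hS : IsNumericalSemigroup S)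
    (hF : frobNS S = F) (hF1 : 1 ≤ F) :
    genusNS S + (S ∩ Set.Icc 1 F).ncard = F := by
  have hne : Sᶜ.Nonempty := compl_ne_of_one_le hF hF1
  have hsub : Sᶜ ⊆ Set.Icc 1 F := by
    intro x hx
    have h1 : x ≤ F := hF ▸ le_csSup hS.2.2.bddAbove hx
    have h2 : x ≠ 0 := fun h => hx (h ▸ hS.1)
    exact ⟨by omega, h1⟩
  have hU : Set.Icc 1 F = Sᶜ ∪ (S ∩ Set.Icc 1 F) := by
    ext x
    constructor
    · intro hx
      by_cases hxS : x ∈ S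
      · exact Or.inr ⟨hxS, hx⟩
      · exact Or.inl hxS
    · rintro (hx | hx)
      · exact hsub hx
      · exact hx.2
  have hdisj : Disjoint Sᶜ (S ∩ Set.Icc 1 F) :=
    Set.disjoint_left.mpr fun x hx hx' => hx hx'.1
  have hfin1 : (S ∩ Set.Icc 1 F).Finite :=
    (Set.finite_Icc 1 F).subset (Set.inter_subset_right)
  have := Set.ncard_union_eq hdisj hS.2.2 hfin1
  rw [← hU] at this
  have hIcc : (Set.Icc 1 F).ncard = F := by
    rw [← Finset.coe_Icc, Set.ncard_coe_finset]; simp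
  rw [hIcc] at this
  unfold genusNS
  omega

def Hset (m F : ℕ) : Set ℕ := {h | F < 2 * h ∧ h < F ∧ m ≤ h}

lemma Hfin (m F : ℕ) : (Hset m F).Finite :=
  (Set.finite_Iio F).subset fun h hh => hh.2.1

lemma maps_aux {T : Set ℕ} {m F : ℕ} (hT : IsNumericalSemigroup T)
    (hmT : multNS T = m) (hFT : frobNS T = F) (hF1 : 1 ≤ F) :
    ∀ x ∈ T ∩ Set.Icc 1 F, max x (F - x) ∈ Hset m F := by
  rintro x ⟨hxT, hx1, hxF⟩
  have hFm : F ∉ T := hFT ▸ frob_not_mem hT (compl_ne_of_one_le hFT hF1)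
  have hxne : 2 * x ≠ F := by
    intro h
    exact hFm (by rw [← h, two_mul]; exact hT.2.1 x hxT x hxT)
  have hmx : m ≤ x := by
    have h' := mult_le hxT (show x ≠ 0 by omega)
    rw [hmT] at h'
    exact h'
  have hxFne : x ≠ F := fun h => hFm (h ▸ hxT)
  rcases max_cases x (F - x) with ⟨h1, h2⟩ | ⟨h1, h2⟩ <;> rw [h1] <;>
    exact ⟨by omega, by omega, by omega⟩

lemma inj_aux {T : Set ℕ} {F : ℕ} (hT : IsNumericalSemigroup T)
    (hFT : frobNS T = F) (hF1 : 1 ≤ F) :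
    Set.InjOn (fun x => max x (F - x)) (T ∩ Set.Icc 1 F) := by
  rintro x ⟨hxT, hx1, hxF⟩ y ⟨hyT, hy1, hyF⟩ hxy
  have hFm : F ∉ T := hFT ▸ frob_not_mem hT (compl_ne_of_one_le hFT hF1)
  simp only at hxy
  rcases max_cases x (F - x) with ⟨h1, h2⟩ | ⟨h1, h2⟩ <;>
    rcases max_cases y (F - y) with ⟨h3, h4⟩ | ⟨h3, h4⟩ <;>
      rw [h1, h3] at hxy
  · omega
  · exfalso; exact hFm (show F ∈ T by
      have : x + y = F := by omega
      exact this ▸ hT.2.1 x hxT y hyT)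
  · exfalso; exact hFm (show F ∈ T by
      have : x + y = F := by omega
      exact this ▸ hT.2.1 x hxT y hyT)
  · omega

lemma card_le {T : Set ℕ} {m F : ℕ} (hT : IsNumericalSemigroup T)
    (hmT : multNS T = m) (hFT : frobNS T = F) (hF1 : 1 ≤ F) :
    (T ∩ Set.Icc 1 F).ncard ≤ (Hset m F).ncard :=
  Set.ncard_le_ncard_of_injOn _ (maps_aux hT hmT hFT hF1)
    (inj_aux hT hFT hF1) (Hfin m F)

lemma card_eq {S : Set ℕ} {m F : ℕ} (hS : IsNumericalSemigroup S)
    (hm : multNS S = m) (hF : frobNS S = F) (hF1 : 1 ≤ F)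
    (hsat : ∀ h ∈ Hset m F, h ∈ S ∨ F - h ∈ S) :
    (S ∩ Set.Icc 1 F).ncard = (Hset m F).ncard := by
  have himg : (fun x => max x (F - x)) '' (S ∩ Set.Icc 1 F) = Hset m F := by
    apply Set.Subset.antisymm
    · rintro _ ⟨x, hx, rfl⟩
      exact maps_aux hS hm hF hF1 x hx
    · rintro h hh
      obtain ⟨h2F, hhF, hmh⟩ := hh
      rcases hsat h ⟨h2F, hhF, hmh⟩ with hc | hc
      · exact ⟨h, ⟨hc, by omega, by omega⟩, by simp only; omega⟩
      · exact ⟨F - h, ⟨hc, by omega, by omega⟩, by simp only; omega⟩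
  rw [← himg, Set.ncard_image_of_injOn (inj_aux hS hF hF1)]

lemma sat_of_mirr {S : Set ℕ} {m F : ℕ} (hS : IsNumericalSemigroup S)
    (hm : multNS S = m) (hF : frobNS S = F) (hirr : MIrreducibleNS m S) :
    ∀ h ∈ Hset m F, h ∈ S ∨ F - h ∈ S := by
  rintro h ⟨h2F, hhF, hmh⟩
  by_contra hc
  push_neg at hc
  obtain ⟨hhS, hFhS⟩ := hc
  have hm0 : m ≠ 0 := hm ▸ (mult_mem hS).2
  have hmS : m ∈ S := by rw [← hm]; exact (mult_mem hS).1
  have hF1 : 1 ≤ F := by omega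
  have hne : Sᶜ.Nonempty := compl_ne_of_one_le hF hF1
  have hFS : F ∉ S := hF ▸ frob_not_mem hS hne
  have hgt : ∀ x : ℕ, F < x → x ∈ S := fun x hx => gt_frob_mem hS (hF ▸ hx)
  have hle : ∀ x ∈ S, x ≠ 0 → m ≤ x := by
    intro x hx hx0
    have := mult_le hx hx0
    omega
  -- the two covering semigroups
  set S₁ : Set ℕ := {x | x ∈ S ∨ ∃ k s, 1 ≤ k ∧ s ∈ S ∧ x = k * h + s} with hS₁def
  set S₂ : Set ℕ := insert F S with hS₂def
  have hSsub1 : S ⊆ S₁ := fun x hx => Or.inl hx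
  have hhS₁ : h ∈ S₁ := Or.inr ⟨1, 0, le_refl 1, hS.1, by ring⟩
  have hFnotS₁ : F ∉ S₁ := by
    rintro (hFS' | ⟨k, s, hk1, hsS, hks⟩)
    · exact hFS hFS'
    · rcases Nat.lt_or_ge k 2 with hk | hk
      · have hk1' : k = 1 := by omega
        subst hk1'
        have : s = F - h := by omega
        exact hFhS (this ▸ hsS)
      · have : 2 * h ≤ k * h := Nat.mul_le_mul_right h hk
        have hs0 : 0 ≤ s := Nat.zero_le s
        omega
  have hNS₁ : IsNumericalSemigroup S₁ := by
    refine ⟨Or.inl hS.1, ?_, ?_⟩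
    · rintro a (haS | ⟨k, s, hk1, hsS, rfl⟩) b (hbS | ⟨k', s', hk1', hsS', rfl⟩)
      · exact Or.inl (hS.2.1 a haS b hbS)
      · exact Or.inr ⟨k', s' + a, hk1', hS.2.1 s' hsS' a haS, by ring⟩
      · exact Or.inr ⟨k, s + b, hk1, hS.2.1 s hsS b hbS, by ring⟩
      · exact Or.inr ⟨k + k', s + s', by omega, hS.2.1 s hsS s' hsS', by ring⟩
    · exact hS.2.2.subset (Set.compl_subset_compl.mpr hSsub1)
  have hmS₁ : multNS S₁ = m := by
    apply le_antisymm
    · exact Nat.sInf_le ⟨hSsub1 hmS, hm0⟩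
    · apply le_csInf ⟨m, Set.mem_setOf.mpr ⟨hSsub1 hmS, hm0⟩⟩
      rintro b ⟨(hbS | ⟨k, s, hk1, hsS, rfl⟩), hb0⟩
      · exact hle b hbS hb0
      · have : h ≤ k * h := Nat.le_mul_of_pos_left h (by omega)
        omega
  have hNS₂ : IsNumericalSemigroup S₂ := by
    refine ⟨Or.inr hS.1, ?_, ?_⟩
    · rintro a (rfl | haS) b (rfl | hbS)
      · exact Or.inr (hgt _ (by omega))
      · rcases Nat.eq_zero_or_pos b with rfl | hb
        · exact Or.inl (by omega)
        · exact Or.inr (hgt _ (by omega))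
      · rcases Nat.eq_zero_or_pos a with rfl | ha
        · exact Or.inl (by omega)
        · exact Or.inr (hgt _ (by omega))
      · exact Or.inr (hS.2.1 a haS b hbS)
    · exact hS.2.2.subset (Set.compl_subset_compl.mpr (Set.subset_insert F S))
  have hmS₂ : multNS S₂ = m := by
    apply le_antisymm
    · exact Nat.sInf_le ⟨Or.inr hmS, hm0⟩
    · apply le_csInf ⟨m, Set.mem_setOf.mpr ⟨Or.inr hmS, hm0⟩⟩
      rintro b ⟨(rfl | hbS), hb0⟩
      · omega
      · exact hle b hbS hb0
  exact hirr.2.2 ⟨S₁, S₂, ⟨hNS₁, hmS₁⟩, ⟨hNS₂, hmS₂⟩,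
    ⟨hSsub1, fun hsub => hhS (hsub hhS₁)⟩,
    ⟨Set.subset_insert F S, fun hsub => hFS (hsub (Or.inl rfl))⟩,
    by
      apply Set.Subset.antisymm
      · exact fun x hx => ⟨hSsub1 hx, Or.inr hx⟩
      · rintro x ⟨hx1, (rfl | hx2)⟩
        · exact absurd hx1 hFnotS₁
        · exact hx2⟩

lemma key_lt {S S₁ : Set ℕ} {F : ℕ} (hS : IsNumericalSemigroup S)
    (hF : frobNS S = F) (hne : Sᶜ.Nonempty) (hS₁ : IsNumericalSemigroup S₁)
    (hsub : S ⊂ S₁) (hFS₁ : F ∉ S₁) :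
    frobNS S₁ = F ∧ genusNS S₁ < genusNS S := by
  have hcsub : S₁ᶜ ⊆ Sᶜ := Set.compl_subset_compl.mpr hsub.subset
  have hFmem : F ∈ S₁ᶜ := hFS₁
  constructor
  · apply le_antisymm
    · apply csSup_le ⟨F, hFmem⟩
      intro x hx
      exact hF ▸ le_csSup hS.2.2.bddAbove (hcsub hx)
    · exact le_csSup (hS.2.2.subset hcsub).bddAbove hFmem
  · apply Set.ncard_lt_ncard _ hS.2.2
    refine ⟨hcsub, fun hsub' => ?_⟩
    obtain ⟨x, hx1, hx2⟩ := Set.exists_of_ssubset hsub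
    exact (hsub' (show x ∈ Sᶜ from hx2)) hx1

end NSAux

open NSAux

theorem stmt13 (m F : ℕ) (S : Set ℕ) (hS : IsNumericalSemigroup S)
    (hm : multNS S = m) (hF : frobNS S = F) :
    MIrreducibleNS m S ↔
      genusNS S = sInf {g : ℕ | ∃ T : Set ℕ, IsNumericalSemigroup T ∧ multNS T = m ∧
        frobNS T = F ∧ genusNS T = g} := by
  have hmemset : genusNS S ∈ {g : ℕ | ∃ T : Set ℕ, IsNumericalSemigroup T ∧
      multNS T = m ∧ frobNS T = F ∧ genusNS T = g} := ⟨S, hS, hm, hF, rfl⟩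
  by_cases hne : Sᶜ.Nonempty
  · -- main case
    have hFS : F ∉ S := hF ▸ frob_not_mem hS hne
    have hF1 : 1 ≤ F := by
      rcases Nat.eq_zero_or_pos F with h0 | h1
      · exact absurd (h0 ▸ hS.1) (h0 ▸ hFS)
      · exact h1
    constructor
    · intro hirr
      refine le_antisymm (le_csInf ⟨_, hmemset⟩ ?_) (Nat.sInf_le hmemset)
      rintro g ⟨T, hT, hmT, hFT, rfl⟩
      have h1 := genus_eq hS hF hF1
      have h2 := genus_eq hT hFT hF1
      have h3 := card_le hT hmT hFT hF1
      have h4 := card_eq hS hm hF hF1 (sat_of_mirr hS hm hF hirr)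
      omega
    · intro hmin
      refine ⟨hS, hm, ?_⟩
      rintro ⟨S₁, S₂, ⟨hS₁, hm₁⟩, ⟨hS₂, hm₂⟩, hsub1, hsub2, hcap⟩
      have key : ∀ S' : Set ℕ, IsNumericalSemigroup S' → multNS S' = m →
          S ⊂ S' → F ∉ S' → False := by
        intro S' hS' hm' hsub' hFS'
        obtain ⟨hfrob', hlt'⟩ := key_lt hS hF hne hS' hsub' hFS'
        have : sInf {g : ℕ | ∃ T : Set ℕ, IsNumericalSemigroup T ∧ multNS T = m ∧
            frobNS T = F ∧ genusNS T = g} ≤ genusNS S' :=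
          Nat.sInf_le ⟨S', hS', hm', hfrob', rfl⟩
        omega
      have : F ∉ S₁ ∨ F ∉ S₂ := by
        by_contra hc
        push_neg at hc
        exact hFS (hcap ▸ Set.mem_inter hc.1 hc.2)
      rcases this with h | h
      · exact key S₁ hS₁ hm₁ hsub1 h
      · exact key S₂ hS₂ hm₂ hsub2 h
  · -- degenerate case : S = univ
    rw [Set.not_nonempty_iff_eq_empty] at hne
    have hg0 : genusNS S = 0 := by rw [genusNS, hne, Set.ncard_empty]
    have hSu : S = Set.univ := by
      rw [← Set.compl_empty_iff, hne]
    constructor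
    · intro _
      have := Nat.sInf_le hmemset
      omega
    · intro _
      refine ⟨hS, hm, ?_⟩
      rintro ⟨S₁, S₂, _, _, hsub1, _, _⟩
      rw [hSu] at hsub1
      exact hsub1.2 (fun x _ => trivial)
end

section
/- Let S be a numerical semigroup with multiplicity m. Then S is m-irreducible if and only if g(S) ∈ {m−1, m, ⌈(F(S)+1)/2⌉}. -/
namespace NSAux

variable {S : Set ℕ}

lemma gap_le_frob (hfin : Sᶜ.Finite) {x : ℕ} (hx : x ∉ S) : x ≤ frobNS S :=
  le_csSup hfin.bddAbove hx

lemma mem_of_frob_lt (hfin : Sᶜ.Finite) {x : ℕ} (hx : frobNS S < x) : x ∈ S := by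
  by_contra h; exact absurd (gap_le_frob hfin h) (not_le.2 hx)

lemma frob_notin (hfin : Sᶜ.Finite) (hne : S ≠ Set.univ) : frobNS S ∉ S := by
  have h : Sᶜ.Nonempty := by rwa [Set.nonempty_compl]
  exact Nat.sSup_mem h hfin.bddAbove

lemma mult_spec (hS : IsNumericalSemigroup S) :
    multNS S ∈ S ∧ multNS S ≠ 0 ∧ ∀ s ∈ S, s ≠ 0 → multNS S ≤ s := by
  obtain ⟨h0, hadd, hfin⟩ := hS
  have hne : {x ∈ S | x ≠ 0}.Nonempty :=
    ⟨frobNS S + 1, mem_of_frob_lt hfin (by omega), by omega⟩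
  have h := Nat.sInf_mem hne
  exact ⟨h.1, h.2, fun s hs hs0 => Nat.sInf_le ⟨hs, hs0⟩⟩

lemma count_below (hS : IsNumericalSemigroup S) (hne : S ≠ Set.univ) :
    (S ∩ Set.Iic (frobNS S)).ncard + genusNS S = frobNS S + 1 := by
  obtain ⟨h0, hadd, hfin⟩ := hS
  set F := frobNS S with hF
  have hsub : Sᶜ ⊆ Set.Iic F := fun x hx => gap_le_frob hfin hx
  have hU : (S ∩ Set.Iic F) ∪ Sᶜ = Set.Iic F := by
    apply Set.Subset.antisymm
    · rintro x (⟨_, hx⟩ | hx)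
      · exact hx
      · exact hsub hx
    · intro x hx
      by_cases h : x ∈ S
      · exact Or.inl ⟨h, hx⟩
      · exact Or.inr h
  have hdisj : Disjoint (S ∩ Set.Iic F) Sᶜ :=
    Set.disjoint_left.2 fun x hx hx' => hx' hx.1
  have hfin1 : (S ∩ Set.Iic F).Finite := (Set.finite_Iic F).subset fun x hx => hx.2
  have := Set.ncard_union_eq hdisj hfin1 hfin
  rw [hU] at this
  have hIic : (Set.Iic F).ncard = F + 1 := by
    rw [← Finset.coe_Iic, Set.ncard_coe_finset]; simp
  rw [hIic] at this
  exact this.symm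

lemma refl_image (hS : IsNumericalSemigroup S) (hne : S ≠ Set.univ) :
    ((fun s => frobNS S - s) '' (S ∩ Set.Iic (frobNS S))).ncard
      = (S ∩ Set.Iic (frobNS S)).ncard ∧
    (fun s => frobNS S - s) '' (S ∩ Set.Iic (frobNS S)) ⊆ Sᶜ := by
  obtain ⟨h0, hadd, hfin⟩ := hS
  set F := frobNS S with hF
  have himg : (fun s => F - s) '' (S ∩ Set.Iic F) ⊆ Sᶜ := by
    rintro _ ⟨s, ⟨hsS, hsle⟩, rfl⟩
    intro hcon
    have : s + (F - s) = F := by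
      have : s ≤ F := hsle
      omega
    have : F ∈ S := by rw [← this]; exact hadd s hsS _ hcon
    exact frob_notin hfin hne this
  refine ⟨Set.ncard_image_of_injOn ?_, himg⟩
  intro a ha b hb hab
  have ha' : a ≤ F := ha.2
  have hb' : b ≤ F := hb.2
  simp only at hab
  omega

lemma two_genus_ge (hS : IsNumericalSemigroup S) (hne : S ≠ Set.univ) :
    frobNS S + 1 ≤ 2 * genusNS S := by
  obtain ⟨hcard, himg⟩ := refl_image hS hne
  have h1 := count_below hS hne
  have h2 : ((fun s => frobNS S - s) '' (S ∩ Set.Iic (frobNS S))).ncard ≤ genusNS S :=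
    Set.ncard_le_ncard himg hS.2.2
  omega

lemma sym_of_genus (hS : IsNumericalSemigroup S) (hne : S ≠ Set.univ)
    (hg : 2 * genusNS S ≤ frobNS S + 2) {a : ℕ}
    (ha : a ∉ S) (haF : a ≠ frobNS S) (ha2 : 2 * a ≠ frobNS S) : frobNS S - a ∈ S := by
  obtain ⟨hcard, himg⟩ := refl_image hS hne
  have h1 := count_below hS hne
  have hgd : genusNS S = Sᶜ.ncard := rfl
  obtain ⟨h0, hadd, hfin⟩ := hS
  have hfr : ∀ x : ℕ, x ∉ S → x ≤ frobNS S := fun x hx => gap_le_frob hfin hx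
  have hfn := frob_notin hfin hne
  set F := frobNS S with hF
  clear_value F
  clear hF
  by_contra hFa
  have haF' : a ≤ F := hfr a ha
  have hane : a ≠ F - a := by omega
  have hP : ({a, F - a} : Set ℕ) ⊆ Sᶜ := by
    rintro y (rfl | rfl)
    · exact ha
    · exact hFa
  have himg2 : (fun s => F - s) '' (S ∩ Set.Iic F) ⊆ Sᶜ \ {a, F - a} := by
    rintro _ ⟨s, ⟨hsS, hsle⟩, rfl⟩
    have hsle' : s ≤ F := hsle
    refine ⟨himg ⟨s, ⟨hsS, hsle⟩, rfl⟩, ?_⟩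
    rintro (h | h)
    · have h' : F - s = a := h
      have : s = F - a := by omega
      exact hFa (this ▸ hsS)
    · have h' : F - s = F - a := h
      have : s = a := by omega
      exact ha (this ▸ hsS)
  have hPn : ({a, F - a} : Set ℕ).ncard = 2 := Set.ncard_pair hane
  have h2g : 2 ≤ genusNS S := by
    have := Set.ncard_le_ncard hP hfin
    rw [hPn] at this; exact this
  have hdiff : (Sᶜ \ {a, F - a}).ncard = genusNS S - 2 := by
    rw [Set.ncard_diff hP (Set.toFinite _), hPn, hgd]
  have hle : ((fun s => F - s) '' (S ∩ Set.Iic F)).ncard ≤ genusNS S - 2 := by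
    rw [← hdiff]
    exact Set.ncard_le_ncard himg2 (hfin.subset Set.diff_subset)
  omega

lemma exists_double_gap (hS : IsNumericalSemigroup S) (hne : S ≠ Set.univ)
    (hg : frobNS S + 2 < 2 * genusNS S) :
    ∃ a, a ∉ S ∧ a ≠ frobNS S ∧ 2 * a ≠ frobNS S ∧ frobNS S - a ∉ S := by
  have h4 := count_below hS hne
  have hgd : genusNS S = Sᶜ.ncard := rfl
  obtain ⟨h0, hadd, hfin⟩ := hS
  have hfr : ∀ x : ℕ, x ∉ S → x ≤ frobNS S := fun x hx => gap_le_frob hfin hx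
  set F := frobNS S with hF
  clear_value F
  clear hF
  by_contra h
  push_neg at h
  set A := Sᶜ \ {y | 2 * y = F} with hA
  have hAfin : A.Finite := hfin.subset Set.diff_subset
  have himg : (fun a => F - a) '' A ⊆ S ∩ Set.Iic F := by
    rintro _ ⟨a, ⟨haS, ha2⟩, rfl⟩
    simp only [Set.mem_setOf_eq] at ha2
    constructor
    · by_cases haF : a = F
      · subst haF; simpa using h0
      · exact h a haS haF ha2
    · simp
  have hinj : Set.InjOn (fun a => F - a) A := by
    intro a ha b hb hab
    have ha' : a ≤ F := hfr a ha.1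
    have hb' : b ≤ F := hfr b hb.1
    simp only at hab
    omega
  have h1 : A.ncard ≤ (S ∩ Set.Iic F).ncard := by
    rw [← Set.ncard_image_of_injOn hinj]
    exact Set.ncard_le_ncard himg ((Set.finite_Iic F).subset fun x hx => hx.2)
  have h2 : Sᶜ ⊆ A ∪ {F / 2} := by
    intro y hy
    by_cases h2y : 2 * y = F
    · right; simp; omega
    · left; exact ⟨hy, h2y⟩
  have h3 : genusNS S ≤ A.ncard + 1 := by
    calc genusNS S ≤ (A ∪ {F / 2}).ncard :=
          Set.ncard_le_ncard h2 (hAfin.union (Set.finite_singleton _))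
      _ ≤ A.ncard + ({F / 2} : Set ℕ).ncard := Set.ncard_union_le _ _
      _ = A.ncard + 1 := by rw [Set.ncard_singleton]
  omega

lemma insert_ns (hS : IsNumericalSemigroup S) {x : ℕ} (hx0 : x ≠ 0)
    (hadd1 : ∀ s ∈ S, s ≠ 0 → x + s ∈ S) (hxx : x + x ∈ S) :
    IsNumericalSemigroup (insert x S) := by
  obtain ⟨h0, hadd, hfin⟩ := hS
  refine ⟨Or.inr h0, ?_, ?_⟩
  · rintro a (rfl | ha) b (rfl | hb)
    · exact Or.inr hxx
    · by_cases hb0 : b = 0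
      · subst hb0; exact Or.inl rfl
      · exact Or.inr (hadd1 b hb hb0)
    · by_cases ha0 : a = 0
      · subst ha0; exact Or.inl (by omega)
      · exact Or.inr (by rw [add_comm]; exact hadd1 a ha ha0)
    · exact Or.inr (hadd a ha b hb)
  · exact hfin.subset fun y hy => fun hyS => hy (Or.inr hyS)

lemma mult_insert (hS : IsNumericalSemigroup S) {x : ℕ} (hx : multNS S < x) :
    multNS (insert x S) = multNS S := by
  obtain ⟨hmS, hm0, hmin⟩ := mult_spec hS
  apply le_antisymm
  · exact Nat.sInf_le ⟨Or.inr hmS, hm0⟩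
  · apply le_csInf
    · exact ⟨multNS S, Or.inr hmS, hm0⟩
    rintro b ⟨hb1, hb0⟩
    rcases hb1 with rfl | hb
    · omega
    · exact hmin b hb hb0

end NSAux

open NSAux in
theorem stmt14 (m : ℕ) (S : Set ℕ) (hS : IsNumericalSemigroup S) (hm : multNS S = m) :
    MIrreducibleNS m S ↔
      genusNS S ∈ ({m - 1, m, (frobNS S + 2) / 2} : Set ℕ) := by
  subst hm
  obtain ⟨h0, hadd, hfin⟩ := hS
  have hS : IsNumericalSemigroup S := ⟨h0, hadd, hfin⟩
  by_cases hne : S = Set.univ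
  · constructor
    · intro _
      have h1S : ∀ n : ℕ, n ∈ S := fun n => hne ▸ trivial
      have hg : genusNS S = 0 := by
        have hc : Sᶜ = ∅ := by rw [hne]; simp
        simp [genusNS, hc]
      have hmu : multNS S = 1 := by
        apply le_antisymm
        · exact Nat.sInf_le ⟨h1S 1, one_ne_zero⟩
        · apply le_csInf
          · exact ⟨1, h1S 1, one_ne_zero⟩
          · rintro b ⟨_, hb0⟩
            omega
      left
      rw [hg, hmu]
    · intro _
      refine ⟨hS, rfl, ?_⟩
      rintro ⟨S₁, S₂, _, _, hsub₁, _, _⟩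
      rw [hne] at hsub₁
      exact hsub₁.not_subset (Set.subset_univ S₁)
  · -- main case
    have hfn : frobNS S ∉ S := frob_notin hfin hne
    have hfr : ∀ x : ℕ, x ∉ S → x ≤ frobNS S := fun x hx => gap_le_frob hfin hx
    obtain ⟨hmS, hm0, hmin⟩ := mult_spec hS
    have h2g : frobNS S + 1 ≤ 2 * genusNS S := two_genus_ge hS hne
    have hgd : genusNS S = Sᶜ.ncard := rfl
    have hIoo : Set.Ioo 0 (multNS S) ⊆ Sᶜ := by
      rintro t ⟨ht0, htm⟩ htS
      exact absurd (hmin t htS (by omega)) (by omega)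
    have hIoo_card : (Set.Ioo 0 (multNS S)).ncard = multNS S - 1 := by
      rw [← Finset.coe_Ioo, Set.ncard_coe_finset]; simp
    have hg_ge : multNS S - 1 ≤ genusNS S := by
      have := Set.ncard_le_ncard hIoo hfin
      omega
    constructor
    · -- m-irreducible → genus condition
      rintro ⟨-, -, hnd⟩
      by_contra hgmem
      simp only [Set.mem_insert_iff, Set.mem_singleton_iff, not_or] at hgmem
      obtain ⟨hg1, hg2, hg3⟩ := hgmem
      have hggem : multNS S + 1 ≤ genusNS S := by omega
      have hgF : frobNS S + 2 < 2 * genusNS S := by omega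
      -- find a gap y > m, y ≠ F
      have hIooF : (Set.Ioo 0 (multNS S) ∪ {frobNS S}).ncard ≤ multNS S := by
        calc (Set.Ioo 0 (multNS S) ∪ {frobNS S}).ncard
            ≤ (Set.Ioo 0 (multNS S)).ncard + ({frobNS S} : Set ℕ).ncard :=
              Set.ncard_union_le _ _
          _ = (multNS S - 1) + 1 := by rw [hIoo_card, Set.ncard_singleton]
          _ ≤ multNS S := by omega
      have hnsub : ¬ (Sᶜ ⊆ Set.Ioo 0 (multNS S) ∪ {frobNS S}) := by
        intro hsub
        have := Set.ncard_le_ncard hsub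
          ((Set.finite_Ioo _ _).union (Set.finite_singleton _))
        omega
      obtain ⟨y, hyS, hyn⟩ := Set.not_subset.1 hnsub
      have hy0 : y ≠ 0 := fun h => hyS (h ▸ h0)
      have hymne : y ≠ multNS S := fun h => hyS (h ▸ hmS)
      have hyF : y ≠ frobNS S := fun h => hyn (Or.inr (by simp [h]))
      have hym : multNS S < y := by
        have hlt : ¬ (y < multNS S) := fun hlt =>
          hyn (Or.inl (Set.mem_Ioo.2 ⟨by omega, hlt⟩))
        omega
      have hyleF : y ≤ frobNS S := hfr y hyS
      have hmF : multNS S < frobNS S := by omega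
      -- the set B of candidate special gaps
      set B : Set ℕ :=
        {z : ℕ | z ∉ S ∧ z ≠ frobNS S ∧ 2 * z ≠ frobNS S ∧ frobNS S - z ∉ S} with hB
      have hBsub : B ⊆ Sᶜ := fun z hz => hz.1
      have hBne : B.Nonempty := by
        obtain ⟨a, ha⟩ := exists_double_gap hS hne hgF
        exact ⟨a, ha⟩
      have hxB : sSup B ∈ B := Nat.sSup_mem hBne (hfin.subset hBsub).bddAbove
      have hxmax : ∀ z ∈ B, z ≤ sSup B := fun z hz =>
        le_csSup (hfin.subset hBsub).bddAbove hz
      set x := sSup B with hxdef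
      obtain ⟨hxS, hxF, hx2, hxFx⟩ := hxB
      have hx0 : x ≠ 0 := fun h => hxS (h ▸ h0)
      have hxle : x ≤ frobNS S := hfr x hxS
      -- x > m
      have hxm : multNS S < x := by
        by_contra hc
        have hxm' : x ≠ multNS S := fun h => hxS (h ▸ hmS)
        have hxlt : x < multNS S := by omega
        -- F - x ≤ x
        have hFxx : frobNS S - x ≤ x := by
          by_contra hc2
          have hz : frobNS S - x ∈ B := by
            refine ⟨hxFx, by omega, by omega, ?_⟩
            have he : frobNS S - (frobNS S - x) = x := by omega
            rw [he]; exact hxS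
          have := hxmax _ hz
          omega
        have hF2m : frobNS S ≤ 2 * multNS S - 2 := by omega
        have hyB : y ∈ B := by
          refine ⟨hyS, hyF, by omega, ?_⟩
          intro hcon
          have h1 : frobNS S - y ≠ 0 := by omega
          have := hmin _ hcon h1
          omega
        have := hxmax _ hyB
        omega
      -- closure of S under adding x
      have hx_add : ∀ s ∈ S, s ≠ 0 → x + s ∈ S := by
        intro s hs hs0
        by_contra hc
        have h1 : x + s ≤ frobNS S := hfr _ hc
        have h2 : x + s ≠ frobNS S := by
          intro he
          have : s = frobNS S - x := by omega
          exact hxFx (this ▸ hs)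
        have h3 : frobNS S - (x + s) ∉ S := by
          intro ht
          have he : (frobNS S - (x + s)) + s = frobNS S - x := by omega
          exact hxFx (he ▸ hadd _ ht s hs)
        by_cases h4 : 2 * (x + s) = frobNS S
        · have hz : frobNS S - x ∈ B := by
            refine ⟨hxFx, by omega, by omega, ?_⟩
            have he : frobNS S - (frobNS S - x) = x := by omega
            rw [he]; exact hxS
          have := hxmax _ hz
          omega
        · have hz : x + s ∈ B := ⟨hc, h2, h4, h3⟩
          have := hxmax _ hz
          omega
      have hxx : x + x ∈ S := by
        by_contra hc
        have h1 : x + x ≤ frobNS S := hfr _ hc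
        have h2 : x + x ≠ frobNS S := by omega
        have h3 : frobNS S - (x + x) ∉ S := by
          intro ht
          have ht0 : frobNS S - (x + x) ≠ 0 := by omega
          have := hx_add _ ht ht0
          have he : x + (frobNS S - (x + x)) = frobNS S - x := by omega
          exact hxFx (he ▸ this)
        by_cases h4 : 2 * (x + x) = frobNS S
        · have hz : frobNS S - x ∈ B := by
            refine ⟨hxFx, by omega, by omega, ?_⟩
            have he : frobNS S - (frobNS S - x) = x := by omega
            rw [he]; exact hxS
          have := hxmax _ hz
          omega
        · have hz : x + x ∈ B := ⟨hc, h2, h4, h3⟩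
          have := hxmax _ hz
          omega
      -- assemble the decomposition
      have NS₁ : IsNumericalSemigroup (insert x S) := insert_ns hS hx0 hx_add hxx
      have NS₂ : IsNumericalSemigroup (insert (frobNS S) S) := by
        refine insert_ns hS (by omega) ?_ ?_
        · intro s hs hs0
          exact mem_of_frob_lt hfin (by omega)
        · exact mem_of_frob_lt hfin (by omega)
      refine hnd ⟨insert x S, insert (frobNS S) S,
        ⟨NS₁, mult_insert hS hxm⟩, ⟨NS₂, mult_insert hS hmF⟩,
        Set.ssubset_insert hxS, Set.ssubset_insert hfn, ?_⟩
      ext t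
      simp only [Set.mem_inter_iff, Set.mem_insert_iff]
      constructor
      · intro ht; exact ⟨Or.inr ht, Or.inr ht⟩
      · rintro ⟨h1 | h1, h2 | h2⟩
        · exact absurd (h1.symm.trans h2) hxF
        · exact h2
        · exact h1
        · exact h1
    · -- genus condition → m-irreducible
      intro hg
      simp only [Set.mem_insert_iff, Set.mem_singleton_iff] at hg
      refine ⟨hS, rfl, ?_⟩
      rintro ⟨S₁, S₂, ⟨hS₁, hm₁⟩, ⟨hS₂, hm₂⟩, hsub₁, hsub₂, heq⟩
      have hmin₁ : ∀ s ∈ S₁, s ≠ 0 → multNS S ≤ s := by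
        have := (mult_spec hS₁).2.2
        rw [hm₁] at this
        exact this
      have hmin₂ : ∀ s ∈ S₂, s ≠ 0 → multNS S ≤ s := by
        have := (mult_spec hS₂).2.2
        rw [hm₂] at this
        exact this
      rcases hg with hg | hg | hg
      · -- genus = m - 1 : S is the maximal semigroup of multiplicity m
        have hSc : Set.Ioo 0 (multNS S) = Sᶜ := by
          apply Set.eq_of_subset_of_ncard_le hIoo _ hfin
          omega
        have : S₁ ⊆ S := by
          intro t ht
          by_contra htS
          have : t ∈ Set.Ioo 0 (multNS S) := hSc ▸ htS
          obtain ⟨ht0, htm⟩ := this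
          exact absurd (hmin₁ t ht (by omega)) (by omega)
        exact hsub₁.not_subset this
      · -- genus = m : S = Sm \ {F}
        have hnsub : ¬ (Sᶜ ⊆ Set.Ioo 0 (multNS S)) := by
          intro hsub
          have := Set.ncard_le_ncard hsub (Set.finite_Ioo _ _)
          omega
        obtain ⟨y, hyS, hyn⟩ := Set.not_subset.1 hnsub
        have hy0 : y ≠ 0 := fun h => hyS (h ▸ h0)
        have hymne : y ≠ multNS S := fun h => hyS (h ▸ hmS)
        have hym : multNS S < y := by
          have hlt : ¬ (y < multNS S) := fun hlt =>
            hyn (Set.mem_Ioo.2 ⟨by omega, hlt⟩)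
          omega
        have hmF : multNS S < frobNS S := lt_of_lt_of_le hym (hfr y hyS)
        have hsubU : Set.Ioo 0 (multNS S) ∪ {frobNS S} ⊆ Sᶜ := by
          rintro t (ht | ht)
          · exact hIoo ht
          · simp only [Set.mem_singleton_iff] at ht
            exact ht ▸ hfn
        have hcardU : (Set.Ioo 0 (multNS S) ∪ {frobNS S}).ncard = multNS S := by
          rw [Set.ncard_union_eq (Set.disjoint_singleton_right.2 (by
              intro hcon
              exact absurd hcon.2 (by omega)))
            (Set.finite_Ioo _ _) (Set.finite_singleton _), hIoo_card,
            Set.ncard_singleton]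
          omega
        have hSc : Set.Ioo 0 (multNS S) ∪ {frobNS S} = Sᶜ := by
          apply Set.eq_of_subset_of_ncard_le hsubU _ hfin
          omega
        have hFmem : ∀ T : Set ℕ, (∀ s ∈ T, s ≠ 0 → multNS S ≤ s) → S ⊂ T →
            frobNS S ∈ T := by
          intro T hminT hsub
          obtain ⟨t, htT, htS⟩ := Set.exists_of_ssubset hsub
          have : t ∈ Set.Ioo 0 (multNS S) ∪ {frobNS S} := hSc ▸ htS
          rcases this with ht | ht
          · obtain ⟨ht0, htm⟩ := ht
            exact absurd (hminT t htT (by omega)) (by omega)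
          · simp only [Set.mem_singleton_iff] at ht
            exact ht ▸ htT
        have hF1 := hFmem S₁ hmin₁ hsub₁
        have hF2 := hFmem S₂ hmin₂ hsub₂
        have hFin : frobNS S ∈ S₁ ∩ S₂ := ⟨hF1, hF2⟩
        rw [← heq] at hFin
        exact hfn hFin
      · -- genus = (F + 2) / 2 : S is irreducible
        have h2le : 2 * genusNS S ≤ frobNS S + 2 := by omega
        have hFmem : ∀ T : Set ℕ, IsNumericalSemigroup T → S ⊂ T → frobNS S ∈ T := by
          intro T hT hsub
          obtain ⟨t, htT, htS⟩ := Set.exists_of_ssubset hsub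
          have ht0 : t ≠ 0 := fun h => htS (h ▸ h0)
          have htF : t ≤ frobNS S := hfr t htS
          by_cases htF' : t = frobNS S
          · exact htF' ▸ htT
          · by_cases ht2 : 2 * t = frobNS S
            · have := hT.2.1 t htT t htT
              have he : frobNS S = t + t := by omega
              rwa [he]
            · have hsym : frobNS S - t ∈ S := sym_of_genus hS hne h2le htS htF' ht2
              have := hT.2.1 t htT _ (hsub.subset hsym)
              have he : t + (frobNS S - t) = frobNS S := by omega
              rwa [he] at this
        have hF1 := hFmem S₁ hS₁ hsub₁
        have hF2 := hFmem S₂ hS₂ hsub₂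
        have hFin : frobNS S ∈ S₁ ∩ S₂ := ⟨hF1, hF2⟩
        rw [← heq] at hFin
        exact hfn hFin
end

section
/- A numerical semigroup S ≠ ℕ is irreducible if and only if it has at most one special gap, i.e., |SG(S)| ≤ 1, where SG(S) = {x ∈ ℕ \ S : S ∪ {x} is a numerical semigroup}. -/
lemma sGap_of_ssubset {S T : Set ℕ} (hS : IsNumericalSemigroup S)
    (hT : IsNumericalSemigroup T) (hsub : S ⊂ T) :
    sSup (T \ S) ∈ T \ S ∧ sSup (T \ S) ∉ S ∧
      IsNumericalSemigroup (S ∪ {sSup (T \ S)}) := by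
  obtain ⟨hle, hnsub⟩ := hsub
  have hnonempty : (T \ S).Nonempty := by
    rcases Set.not_subset.mp hnsub with ⟨t, ht, hts⟩
    exact ⟨t, ht, hts⟩
  have hfin : (T \ S).Finite := hS.2.2.subset (fun z hz => hz.2)
  set x := sSup (T \ S) with hx
  have hmem : x ∈ T \ S := Nat.sSup_mem hnonempty hfin.bddAbove
  have hub : ∀ z ∈ T \ S, z ≤ x := fun z hz => le_csSup hfin.bddAbove hz
  -- key: any element of T strictly greater than x is in S
  have hkey : ∀ z ∈ T, x < z → z ∈ S := by
    intro z hz hlt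
    by_contra hzs
    exact absurd (hub z ⟨hz, hzs⟩) (not_le.mpr hlt)
  refine ⟨hmem, hmem.2, Or.inl hS.1, ?_, ?_⟩
  · rintro a (ha | ha) b (hb | hb)
    · exact Or.inl (hS.2.1 a ha b hb)
    · simp only [Set.mem_singleton_iff] at hb; subst hb
      rcases Nat.eq_zero_or_pos a with rfl | hpos
      · exact Or.inr (by simp)
      · exact Or.inl (hkey _ (hT.2.1 a (hle ha) x hmem.1) (by omega))
    · simp only [Set.mem_singleton_iff] at ha; subst ha
      rcases Nat.eq_zero_or_pos b with rfl | hpos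
      · exact Or.inr (by simp)
      · exact Or.inl (hkey _ (hT.2.1 x hmem.1 b (hle hb)) (by omega))
    · simp only [Set.mem_singleton_iff] at ha hb; subst ha; subst hb
      rcases Nat.eq_zero_or_pos x with h0 | hpos
      · exact Or.inr (by simp [h0])
      · exact Or.inl (hkey _ (hT.2.1 x hmem.1 x hmem.1) (by omega))
  · exact hS.2.2.subset (Set.compl_subset_compl.mpr Set.subset_union_left)

theorem stmt15 (S : Set ℕ) (hS : IsNumericalSemigroup S) (hne : S ≠ Set.univ) :
    IrreducibleNS S ↔
      {x : ℕ | x ∉ S ∧ IsNumericalSemigroup (S ∪ {x})}.ncard ≤ 1 := by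
  set SG := {x : ℕ | x ∉ S ∧ IsNumericalSemigroup (S ∪ {x})} with hSG
  have hSGfin : SG.Finite := hS.2.2.subset (fun z hz => hz.1)
  constructor
  · intro hirr
    by_contra hcard
    push_neg at hcard
    obtain ⟨a, b, ha, hb, hab⟩ := (Set.one_lt_ncard_iff hSGfin).mp hcard
    refine hirr.2 ⟨S ∪ {a}, S ∪ {b}, ha.2, hb.2, ?_, ?_, ?_⟩
    · exact ⟨Set.subset_union_left, fun h => ha.1 (h (Or.inr rfl))⟩
    · exact ⟨Set.subset_union_left, fun h => hb.1 (h (Or.inr rfl))⟩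
    · ext z
      constructor
      · exact fun hz => ⟨Or.inl hz, Or.inl hz⟩
      · rintro ⟨hz1 | hz1, hz2 | hz2⟩
        · exact hz1
        · exact hz1
        · exact hz2
        · simp only [Set.mem_singleton_iff] at hz1 hz2
          omega
  · intro hcard
    refine ⟨hS, ?_⟩
    rintro ⟨S₁, S₂, h1, h2, hs1, hs2, heq⟩
    obtain ⟨hm1, hn1, hsg1⟩ := sGap_of_ssubset hS h1 hs1
    obtain ⟨hm2, hn2, hsg2⟩ := sGap_of_ssubset hS h2 hs2
    have hx1 : sSup (S₁ \ S) ∈ SG := ⟨hn1, hsg1⟩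
    have hx2 : sSup (S₂ \ S) ∈ SG := ⟨hn2, hsg2⟩
    have hxx : sSup (S₁ \ S) = sSup (S₂ \ S) :=
      (Set.ncard_le_one hSGfin).mp hcard _ hx1 _ hx2
    have hmem2 : sSup (S₁ \ S) ∈ S₁ ∩ S₂ := ⟨hm1.1, by rw [hxx]; exact hm2.1⟩
    rw [← heq] at hmem2
    exact hn1 hmem2
end

section
/- Let S be a numerical semigroup with multiplicity m. Then S is m-irreducible if and only if |{x ∈ SG(S) : x > m}| ≤ 1, where SG(S) is the set of special gaps of S. -/
/-!
If `S = S₁ ∩ S₂` with `S ⊊ Sᵢ` of multiplicity `m`, the largest element of `Sᵢ \ S` is a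
special gap of `S` above `m`, and these two gaps differ because their intersection lies in `S`.
Conversely, two special gaps `x₁ ≠ x₂` above `m` split `S` as `(S ∪ {x₁}) ∩ (S ∪ {x₂})`,
and adjoining an element above `m` does not change the multiplicity.
-/

def IsSpecialGap (S : Set ℕ) (x : ℕ) : Prop :=
  x ∉ S ∧ IsNumericalSemigroup (S ∪ {x})

theorem multNS_le {S : Set ℕ} {x : ℕ} (hx : x ∈ S) (hx0 : x ≠ 0) : multNS S ≤ x :=
  Nat.sInf_le ⟨hx, hx0⟩

namespace IsNumericalSemigroup

variable {S : Set ℕ}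

theorem exists_mem_ne_zero (hS : IsNumericalSemigroup S) : ∃ x ∈ S, x ≠ 0 := by
  obtain ⟨x, hx, hx0⟩ := ((Set.infinite_of_finite_compl hS.2.2).sdiff
    (Set.finite_singleton 0)).nonempty
  exact ⟨x, hx, hx0⟩

theorem multNS_mem (hS : IsNumericalSemigroup S) : multNS S ∈ S ∧ multNS S ≠ 0 :=
  Nat.sInf_mem hS.exists_mem_ne_zero

theorem multNS_union_singleton (hS : IsNumericalSemigroup S) {x : ℕ} (hx : multNS S < x) :
    multNS (S ∪ {x}) = multNS S := by
  obtain ⟨hmS, hm0⟩ := hS.multNS_mem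
  refine le_antisymm (Nat.sInf_le ⟨Or.inl hmS, hm0⟩) (le_csInf ⟨_, Or.inl hmS, hm0⟩ ?_)
  rintro y ⟨hy | rfl, hy0⟩
  · exact multNS_le hy hy0
  · exact hx.le

/-- Sums of `x` with nonzero elements of `T` exceed `x`, hence already lie in `S`. -/
theorem isSpecialGap_of_isGreatest (hS : IsNumericalSemigroup S) {T : Set ℕ}
    (hT : ∀ a ∈ T, ∀ b ∈ T, a + b ∈ T) (hST : S ⊆ T) {x : ℕ}
    (hx : IsGreatest (T \ S) x) : IsSpecialGap S x := by
  obtain ⟨⟨hxT, hxS⟩, hmax⟩ := hx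
  have hx0 : x ≠ 0 := fun h => hxS (h ▸ hS.1)
  have above : ∀ y ∈ T, x < y → y ∈ S := fun y hy hlt =>
    by_contra fun hyS => (hmax ⟨hy, hyS⟩).not_gt hlt
  have add_x : ∀ a ∈ S ∪ {x}, a + x ∈ S ∪ {x} := by
    rintro a (ha | rfl)
    · rcases Nat.eq_zero_or_pos a with rfl | ha0
      · simp
      · exact Or.inl (above _ (hT _ (hST ha) _ hxT) (by omega))
    · exact Or.inl (above _ (hT _ hxT _ hxT) (by omega))
  refine ⟨hxS, Or.inl hS.1, ?_,
    hS.2.2.subset (Set.compl_subset_compl.2 Set.subset_union_left)⟩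
  rintro a ha b (hb | rfl)
  · rcases ha with ha | rfl
    · exact Or.inl (hS.2.1 a ha b hb)
    · rw [add_comm]; exact add_x b (Or.inl hb)
  · exact add_x a ha

theorem exists_isSpecialGap_of_ssubset (hS : IsNumericalSemigroup S) {T : Set ℕ}
    (hT : IsNumericalSemigroup T) (hmT : multNS T = multNS S) (hST : S ⊂ T) :
    ∃ x ∈ T, IsSpecialGap S x ∧ multNS S < x := by
  obtain ⟨x, hx, hmax⟩ := Set.exists_max_image (T \ S) id
    (hS.2.2.subset fun _ hy => hy.2) (Set.nonempty_of_ssubset hST)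
  have hgap := hS.isSpecialGap_of_isGreatest hT.2.1 hST.subset ⟨hx, hmax⟩
  have hx0 : x ≠ 0 := fun h => hx.2 (h ▸ hS.1)
  have hxm : multNS S ≠ x := fun h => hx.2 (h ▸ hS.multNS_mem.1)
  exact ⟨x, hx.1, hgap, lt_of_le_of_ne (hmT ▸ multNS_le hx.1 hx0) hxm⟩

end IsNumericalSemigroup

theorem union_singleton_inter_union_singleton {S : Set ℕ} {x₁ x₂ : ℕ} (hne : x₁ ≠ x₂) :
    (S ∪ {x₁}) ∩ (S ∪ {x₂}) = S := by
  rw [← Set.union_inter_distrib_left, Set.singleton_inter_of_notMem (s := {x₂}) hne,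
    Set.union_empty]

theorem stmt17 (m : ℕ) (S : Set ℕ) (hS : IsNumericalSemigroup S) (hm : multNS S = m) :
    MIrreducibleNS m S ↔
      {x : ℕ | (x ∉ S ∧ IsNumericalSemigroup (S ∪ {x})) ∧ m < x}.ncard ≤ 1 := by
  subst hm
  change _ ↔ {x | IsSpecialGap S x ∧ multNS S < x}.ncard ≤ 1
  rw [Set.ncard_le_one (hS.2.2.subset fun _ hx => hx.1.1)]
  constructor
  · rintro ⟨-, -, hirr⟩ x₁ ⟨hg₁, hx₁⟩ x₂ ⟨hg₂, hx₂⟩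
    by_contra hne
    have extend {x} (hg : IsSpecialGap S x) (hx : multNS S < x) :
        IsNumericalSemigroup (S ∪ {x}) ∧ multNS (S ∪ {x}) = multNS S ∧ S ⊂ S ∪ {x} :=
      ⟨hg.2, hS.multNS_union_singleton hx, Set.union_singleton ▸ Set.ssubset_insert hg.1⟩
    obtain ⟨h₁, hm₁, hs₁⟩ := extend hg₁ hx₁
    obtain ⟨h₂, hm₂, hs₂⟩ := extend hg₂ hx₂
    exact hirr ⟨_, _, ⟨h₁, hm₁⟩, ⟨h₂, hm₂⟩, hs₁, hs₂,
      (union_singleton_inter_union_singleton hne).symm⟩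
  · refine fun hgaps => ⟨hS, rfl, ?_⟩
    rintro ⟨S₁, S₂, ⟨h₁, hm₁⟩, ⟨h₂, hm₂⟩, hs₁, hs₂, rfl⟩
    obtain ⟨x₁, hx₁, hg₁, hlt₁⟩ := hS.exists_isSpecialGap_of_ssubset h₁ hm₁ hs₁
    obtain ⟨x₂, hx₂, hg₂, hlt₂⟩ := hS.exists_isSpecialGap_of_ssubset h₂ hm₂ hs₂
    obtain rfl := hgaps x₁ ⟨hg₁, hlt₁⟩ x₂ ⟨hg₂, hlt₂⟩
    exact hg₁.1 ⟨hx₁, hx₂⟩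
end

section
/- Let T be a numerical semigroup with multiplicity m, with Apéry set Ap(T,m) = {w(0), …, w(m−1)} where w(i) is the least element of T congruent to i mod m. If x ∈ SG(T) and x > m, then Ap(T ∪ {x}, m) = (Ap(T,m) \ {w(x mod m)}) ∪ {w(x mod m) − m}. -/
/-- The Apéry set of `S` with respect to `n`: elements `t` of `S` with `t - n ∉ S`
(subtraction over the integers, i.e. no `s ∈ S` with `s + n = t`). -/
def aperyNS (S : Set ℕ) (n : ℕ) : Set ℕ := {t ∈ S | ∀ s ∈ S, s + n ≠ t}

theorem stmt19 (m : ℕ) (T : Set ℕ) (hT : IsNumericalSemigroup T) (hm : multNS T = m)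
    (x : ℕ) (hx : x ∉ T) (hxs : IsNumericalSemigroup (T ∪ {x})) (hxm : m < x)
    (w : ℕ) (hw : IsLeast {t ∈ T | t % m = x % m} w) :
    aperyNS (T ∪ {x}) m = (aperyNS T m \ {w}) ∪ {w - m} := by
  obtain ⟨h0, hadd, hfin⟩ := hT
  have hinf : T.Infinite := by
    have := hfin.infinite_compl
    rwa [compl_compl] at this
  have hne : {y ∈ T | y ≠ 0}.Nonempty := by
    obtain ⟨y, hy1, hy2⟩ := (hinf.diff (Set.finite_singleton 0)).nonempty
    exact ⟨y, hy1, hy2⟩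
  have hmT : m ∈ T ∧ m ≠ 0 := by
    have h := Nat.sInf_mem hne
    rw [show sInf {y ∈ T | y ≠ 0} = m from hm] at h
    exact h
  have hm0 : 0 < m := Nat.pos_of_ne_zero hmT.2
  have hmul : ∀ k, k * m ∈ T := by
    intro k
    induction k with
    | zero => simpa using h0
    | succ n ih => have := hadd _ ih _ hmT.1; simpa [Nat.succ_mul] using this
  obtain ⟨h0', hadd', _⟩ := hxs
  have hxmT : x + m ∈ T := by
    have := hadd' x (Or.inr rfl) m (Or.inl hmT.1)
    rcases this with h | h
    · exact h
    · simp only [Set.mem_singleton_iff] at h; omega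
  have hwle : w ≤ x + m := hw.2 ⟨hxmT, Nat.add_mod_right x m⟩
  have hxw : x ≤ w := by
    by_contra hlt
    push_neg at hlt
    have hmod : w % m = x % m := hw.1.2
    have hdvd : m ∣ x - w := (Nat.modEq_iff_dvd' hlt.le).mp hmod
    obtain ⟨k, hk⟩ := hdvd
    have hX : x = w + m * k := by omega
    have : x ∈ T := hX ▸ hadd w hw.1.1 (m * k) (by rw [Nat.mul_comm]; exact hmul k)
    exact hx this
  have hwne : w ≠ x := fun h => hx (h ▸ hw.1.1)
  have hweq : w = x + m := by
    have hdvd : m ∣ w - x := (Nat.modEq_iff_dvd' hxw).mp hw.1.2.symm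
    have hpos : 0 < w - x := by omega
    have := Nat.le_of_dvd hpos hdvd
    omega
  subst hweq
  rw [Nat.add_sub_cancel]
  ext t
  simp only [aperyNS, Set.mem_union, Set.mem_diff, Set.mem_singleton_iff, Set.mem_setOf_eq]
  constructor
  · rintro ⟨htT | rfl, hap⟩
    · left
      refine ⟨⟨htT, fun s hs => hap s (Or.inl hs)⟩, fun h => ?_⟩
      exact hap x (Or.inr rfl) h.symm
    · right; rfl
  · rintro (⟨⟨htT, hap⟩, hne'⟩ | rfl)
    · refine ⟨Or.inl htT, ?_⟩
      rintro s (hs | rfl) heq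
      · exact hap s hs heq
      · exact hne' heq.symm
    · refine ⟨Or.inr rfl, ?_⟩
      rintro s (hs | rfl) heq
      · exact hx (heq ▸ hadd s hs m hmT.1)
      · omega
end
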